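/- For the d=1 base case of Lemma 1: θ(μ_1 - λ_1 + u) equals θ(u + (μ_1 - λ_1)), i.e. the deformed determinant identity holds trivially for d = 1; and for d = 2 it reads θ(μ_1-λ_1+u)·θ(μ_2-λ_2+u-ℏ)·θ(μ_1-λ_2+ℏ)·θ(μ_2-λ_1) - θ(μ_1-λ_2+u)·θ(μ_2-λ_1+u-ℏ)·θ(μ_1-λ_1+ℏ)·θ(μ_2-λ_2) = θ(u+μ_1+μ_2-λ_1-λ_2)·θ(u-ℏ)·θ(λ_2-λ_1)·θ(ℏ+μ_1-μ_2), for all μ_1,μ_2,λ_1,λ_2,u,ℏ ∈ ℂ. -/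

import Mathlib

/-- The Jacobi theta function `θ(u) = θ_{1/2,1}(u+1/2, τ)`. -/
noncomputable def jtheta (τ u : ℂ) : ℂ :=
  ∑' μ : ℤ, Complex.exp ((2 * ↑Real.pi * Complex.I) *
    (((μ : ℂ) + 1/2) * (u + 1/2) + ((μ : ℂ) + 1/2)^2 * τ / 2))

namespace DeformedDetAux

open Complex

/-- The general term of `jtheta`. -/
noncomputable def Fterm (τ u : ℂ) (m : ℤ) : ℂ :=
  Complex.exp ((2 * ↑Real.pi * Complex.I) *
    (((m : ℂ) + 1/2) * (u + 1/2) + ((m : ℂ) + 1/2)^2 * τ / 2))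

/-- Odd-index sub-theta term. -/
noncomputable def Aterm (τ z : ℂ) (a : ℤ) : ℂ :=
  Complex.exp ((2 * ↑Real.pi * Complex.I) *
    ((2*(a : ℂ)+1) * z + (2*(a : ℂ)+1)^2 * τ / 4))

/-- Even-index sub-theta term. -/
noncomputable def Bterm (τ z : ℂ) (b : ℤ) : ℂ :=
  Complex.exp ((2 * ↑Real.pi * Complex.I) * (2*(b : ℂ) * z + (b : ℂ)^2 * τ))

lemma jtheta_eq (τ u : ℂ) : jtheta τ u = ∑' m : ℤ, Fterm τ u m := rfl

lemma Fterm_eq (τ u : ℂ) (m : ℤ) :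
    Fterm τ u m = Complex.exp (↑Real.pi * I * (u + 1/2) + ↑Real.pi * I * τ / 4) *
      jacobiTheta₂_term m (u + 1/2 + τ/2) τ := by
  rw [Fterm, jacobiTheta₂_term, ← Complex.exp_add]
  congr 1
  ring

lemma Aterm_eq (τ z : ℂ) (a : ℤ) :
    Aterm τ z a = Complex.exp (2 * ↑Real.pi * I * z + ↑Real.pi * I * τ / 2) *
      jacobiTheta₂_term a (2*z + τ) (2*τ) := by
  rw [Aterm, jacobiTheta₂_term, ← Complex.exp_add]
  congr 1
  ring

lemma Bterm_eq (τ z : ℂ) (b : ℤ) :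
    Bterm τ z b = jacobiTheta₂_term b (2*z) (2*τ) := by
  rw [Bterm, jacobiTheta₂_term]
  congr 1
  ring

lemma summable_norm_Fterm {τ : ℂ} (hτ : 0 < τ.im) (u : ℂ) :
    Summable fun m : ℤ => ‖Fterm τ u m‖ := by
  simp only [Fterm_eq, norm_mul]
  exact (summable_norm_iff.mpr
    ((summable_jacobiTheta₂_term_iff _ τ).mpr hτ)).mul_left _

lemma im_two_tau {τ : ℂ} (hτ : 0 < τ.im) : 0 < ((2 : ℂ) * τ).im := by
  simp only [Complex.mul_im]
  norm_num
  linarith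

lemma summable_norm_Aterm {τ : ℂ} (hτ : 0 < τ.im) (z : ℂ) :
    Summable fun a : ℤ => ‖Aterm τ z a‖ := by
  simp only [Aterm_eq, norm_mul]
  exact (summable_norm_iff.mpr
    ((summable_jacobiTheta₂_term_iff _ _).mpr (im_two_tau hτ))).mul_left _

lemma summable_norm_Bterm {τ : ℂ} (hτ : 0 < τ.im) (z : ℂ) :
    Summable fun b : ℤ => ‖Bterm τ z b‖ := by
  simp only [Bterm_eq]
  exact summable_norm_iff.mpr ((summable_jacobiTheta₂_term_iff _ _).mpr (im_two_tau hτ))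

/-- The even-diagonal set in `ℤ × ℤ`. -/
def sEven : Set (ℤ × ℤ) := {p : ℤ × ℤ | Even (p.1 + p.2)}

lemma bij_even : Function.Bijective
    (fun ab : ℤ × ℤ => (⟨(ab.1 + ab.2, ab.1 - ab.2), ⟨ab.1, by ring⟩⟩ : sEven)) := by
  constructor
  · rintro ⟨a, b⟩ ⟨a', b'⟩ h
    simp only [Subtype.mk.injEq, Prod.mk.injEq] at h
    have h1 : a + b = a' + b' := congrArg (fun p : sEven => p.1.1) h
    have h2 : a - b = a' - b' := congrArg (fun p : sEven => p.1.2) h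
    ext <;> omega
  · rintro ⟨⟨m, n⟩, ⟨r, hr⟩⟩
    refine ⟨(r, m - r), ?_⟩
    simp only [Subtype.mk.injEq, Prod.mk.injEq]
    simp only at hr
    exact Subtype.ext (Prod.ext (by show r + (m - r) = m; omega) (by show r - (m - r) = n; omega))

lemma bij_odd : Function.Bijective
    (fun ab : ℤ × ℤ => (⟨(ab.1 + ab.2, ab.1 - ab.2 - 1),
      by rintro ⟨r, hr⟩; omega⟩ : ↥sEvenᶜ)) := by
  constructor
  · rintro ⟨a, b⟩ ⟨a', b'⟩ h
    simp only [Subtype.mk.injEq, Prod.mk.injEq] at h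
    obtain ⟨h1, h2⟩ := h
    ext <;> omega
  · rintro ⟨⟨m, n⟩, hp⟩
    have hodd : Odd (m + n) := Int.not_even_iff_odd.mp hp
    obtain ⟨r, hr⟩ := hodd
    refine ⟨(r + 1, m - r - 1), ?_⟩
    simp only [Subtype.mk.injEq, Prod.mk.injEq]
    constructor <;> omega

/-- Equivalence onto the even part. -/
noncomputable def eEven : ℤ × ℤ ≃ sEven := Equiv.ofBijective _ bij_even

/-- Equivalence onto the odd part. -/
noncomputable def eOdd : ℤ × ℤ ≃ ↥sEvenᶜ := Equiv.ofBijective _ bij_odd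

lemma key_even (τ x y : ℂ) (a b : ℤ) :
    Fterm τ (x+y) (a+b) * Fterm τ (x-y) (a-b) = -(Aterm τ x a * Bterm τ y b) := by
  have h1 : Fterm τ (x+y) (a+b) * Fterm τ (x-y) (a-b)
      = Complex.exp (((2 * ↑Real.pi * Complex.I) *
            ((2*(a : ℂ)+1) * x + (2*(a : ℂ)+1)^2 * τ / 4)
          + (2 * ↑Real.pi * Complex.I) * (2*(b : ℂ) * y + (b : ℂ)^2 * τ))
          + ((a : ℂ) * (2 * ↑Real.pi * Complex.I) + ↑Real.pi * Complex.I)) := by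
    rw [Fterm, Fterm, ← Complex.exp_add]
    congr 1
    push_cast
    ring
  rw [h1, Complex.exp_add, Complex.exp_add, Complex.exp_add,
    Complex.exp_int_mul_two_pi_mul_I, Complex.exp_pi_mul_I, Aterm, Bterm]
  ring

lemma key_odd (τ x y : ℂ) (a b : ℤ) :
    Fterm τ (x+y) (a+b) * Fterm τ (x-y) (a-b-1) = Bterm τ x a * Aterm τ y b := by
  have h1 : Fterm τ (x+y) (a+b) * Fterm τ (x-y) (a-b-1)
      = Complex.exp (((2 * ↑Real.pi * Complex.I) * (2*(a : ℂ) * x + (a : ℂ)^2 * τ)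
          + (2 * ↑Real.pi * Complex.I) *
            ((2*(b : ℂ)+1) * y + (2*(b : ℂ)+1)^2 * τ / 4))
          + (a : ℂ) * (2 * ↑Real.pi * Complex.I)) := by
    rw [Fterm, Fterm, ← Complex.exp_add]
    congr 1
    push_cast
    ring
  rw [h1, Complex.exp_add, Complex.exp_add, Complex.exp_int_mul_two_pi_mul_I,
    Bterm, Aterm]
  ring

/-- The key splitting: product of two thetas as a 2×2 determinant. -/
lemma theta_prod {τ : ℂ} (hτ : 0 < τ.im) (x y : ℂ) :
    jtheta τ (x + y) * jtheta τ (x - y) =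
      (∑' b : ℤ, Bterm τ x b) * (∑' a : ℤ, Aterm τ y a) -
        (∑' a : ℤ, Aterm τ x a) * (∑' b : ℤ, Bterm τ y b) := by
  have hstep1 : jtheta τ (x+y) * jtheta τ (x-y)
      = ∑' z : ℤ × ℤ, Fterm τ (x+y) z.1 * Fterm τ (x-y) z.2 := by
    rw [jtheta_eq, jtheta_eq]
    exact tsum_mul_tsum_of_summable_norm (summable_norm_Fterm hτ (x+y))
      (summable_norm_Fterm hτ (x-y))
  set f : ℤ × ℤ → ℂ := fun z => Fterm τ (x+y) z.1 * Fterm τ (x-y) z.2 with hfdef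
  have hgA : Summable (fun ab : ℤ × ℤ => Aterm τ x ab.1 * Bterm τ y ab.2) :=
    summable_mul_of_summable_norm (summable_norm_Aterm hτ x) (summable_norm_Bterm hτ y)
  have hgB : Summable (fun ab : ℤ × ℤ => Bterm τ x ab.1 * Aterm τ y ab.2) :=
    summable_mul_of_summable_norm (summable_norm_Bterm hτ x) (summable_norm_Aterm hτ y)
  have hcompEven : (f ∘ (↑)) ∘ eEven
      = fun ab : ℤ × ℤ => -(Aterm τ x ab.1 * Bterm τ y ab.2) := by
    funext ab
    exact key_even τ x y ab.1 ab.2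
  have hcompOdd : (f ∘ (↑)) ∘ eOdd
      = fun ab : ℤ × ℤ => Bterm τ x ab.1 * Aterm τ y ab.2 := by
    funext ab
    exact key_odd τ x y ab.1 ab.2
  have hsEven : Summable (f ∘ (↑) : sEven → ℂ) := by
    rw [← Equiv.summable_iff eEven, hcompEven]
    exact hgA.neg
  have hsOdd : Summable (f ∘ (↑) : ↥sEvenᶜ → ℂ) := by
    rw [← Equiv.summable_iff eOdd, hcompOdd]
    exact hgB
  have hsplit := Summable.tsum_add_tsum_compl (s := sEven) hsEven hsOdd
  have hEvenVal : (∑' p : sEven, f p)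
      = -((∑' a : ℤ, Aterm τ x a) * (∑' b : ℤ, Bterm τ y b)) := by
    rw [← Equiv.tsum_eq eEven (fun p : sEven => f ↑p)]
    calc ∑' ab : ℤ × ℤ, f ↑(eEven ab)
        = ∑' ab : ℤ × ℤ, -(Aterm τ x ab.1 * Bterm τ y ab.2) :=
          tsum_congr fun ab => key_even τ x y ab.1 ab.2
      _ = -(∑' ab : ℤ × ℤ, Aterm τ x ab.1 * Bterm τ y ab.2) := tsum_neg
      _ = -((∑' a : ℤ, Aterm τ x a) * (∑' b : ℤ, Bterm τ y b)) := by
          rw [tsum_mul_tsum_of_summable_norm (summable_norm_Aterm hτ x)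
            (summable_norm_Bterm hτ y)]
  have hOddVal : (∑' p : ↥sEvenᶜ, f p)
      = (∑' b : ℤ, Bterm τ x b) * (∑' a : ℤ, Aterm τ y a) := by
    rw [← Equiv.tsum_eq eOdd (fun p : ↥sEvenᶜ => f ↑p)]
    calc ∑' ab : ℤ × ℤ, f ↑(eOdd ab)
        = ∑' ab : ℤ × ℤ, Bterm τ x ab.1 * Aterm τ y ab.2 :=
          tsum_congr fun ab => key_odd τ x y ab.1 ab.2
      _ = (∑' b : ℤ, Bterm τ x b) * (∑' a : ℤ, Aterm τ y a) := by
          rw [tsum_mul_tsum_of_summable_norm (summable_norm_Bterm hτ x)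
            (summable_norm_Aterm hτ y)]
  rw [hstep1, ← hsplit, hEvenVal, hOddVal]
  ring

end DeformedDetAux

/-- The `d = 1` and `d = 2` cases of the deformed determinant identity (Lemma 1):
for `d = 1` it reads `θ(μ₁-l₁+u) = θ(u+(μ₁-l₁))`, and for `d = 2` it reads
`θ(μ₁-l₁+u)θ(μ₂-l₂+u-ℏ)θ(μ₁-l₂+ℏ)θ(μ₂-l₁) - θ(μ₁-l₂+u)θ(μ₂-l₁+u-ℏ)θ(μ₁-l₁+ℏ)θ(μ₂-l₂)
 = θ(u+μ₁+μ₂-l₁-l₂)θ(u-ℏ)θ(l₂-l₁)θ(ℏ+μ₁-μ₂)`. -/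
theorem deformed_det_low_rank (τ : ℂ) (hτ : 0 < τ.im) :
    (∀ μ₁ l₁ u : ℂ, jtheta τ (μ₁ - l₁ + u) = jtheta τ (u + (μ₁ - l₁))) ∧
    (∀ μ₁ μ₂ l₁ l₂ u hbar : ℂ,
      jtheta τ (μ₁ - l₁ + u) * jtheta τ (μ₂ - l₂ + u - hbar) *
          jtheta τ (μ₁ - l₂ + hbar) * jtheta τ (μ₂ - l₁) -
        jtheta τ (μ₁ - l₂ + u) * jtheta τ (μ₂ - l₁ + u - hbar) *
          jtheta τ (μ₁ - l₁ + hbar) * jtheta τ (μ₂ - l₂) =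
      jtheta τ (u + μ₁ + μ₂ - l₁ - l₂) * jtheta τ (u - hbar) *
        jtheta τ (l₂ - l₁) * jtheta τ (hbar + μ₁ - μ₂)) := by
  constructor
  · intro μ₁ l₁ u
    rw [show μ₁ - l₁ + u = u + (μ₁ - l₁) by ring]
  · intro μ₁ μ₂ l₁ l₂ u hbar
    set X : ℂ := (μ₁ + μ₂ - 2*l₁ + u)/2 with hX
    set Y : ℂ := (μ₁ + μ₂ - 2*l₂ + u)/2 with hY
    set U : ℂ := (μ₁ - μ₂ + u)/2 with hU
    set V : ℂ := (μ₂ - μ₁ + u - 2*hbar)/2 with hV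
    rw [show μ₂ - l₂ + u - hbar = Y + V by rw [hY, hV]; ring,
      show μ₂ - l₁ + u - hbar = X + V by rw [hX, hV]; ring,
      show μ₁ - l₁ + u = X + U by rw [hX, hU]; ring,
      show μ₁ - l₂ + u = Y + U by rw [hY, hU]; ring,
      show μ₁ - l₂ + hbar = Y - V by rw [hY, hV]; ring,
      show μ₁ - l₁ + hbar = X - V by rw [hX, hV]; ring,
      show μ₂ - l₁ = X - U by rw [hX, hU]; ring,
      show μ₂ - l₂ = Y - U by rw [hY, hU]; ring,
      show u + μ₁ + μ₂ - l₁ - l₂ = X + Y by rw [hX, hY]; ring,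
      show l₂ - l₁ = X - Y by rw [hX, hY]; ring,
      show u - hbar = U + V by rw [hU, hV]; ring,
      show hbar + μ₁ - μ₂ = U - V by rw [hU, hV]; ring]
    have hXU := DeformedDetAux.theta_prod hτ X U
    have hYV := DeformedDetAux.theta_prod hτ Y V
    have hXV := DeformedDetAux.theta_prod hτ X V
    have hYU := DeformedDetAux.theta_prod hτ Y U
    have hXY := DeformedDetAux.theta_prod hτ X Y
    have hUV := DeformedDetAux.theta_prod hτ U V
    linear_combination (jtheta τ (Y+V) * jtheta τ (Y-V)) * hXU +
      ((∑' b : ℤ, DeformedDetAux.Bterm τ X b) * (∑' a : ℤ, DeformedDetAux.Aterm τ U a) -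
        (∑' a : ℤ, DeformedDetAux.Aterm τ X a) * (∑' b : ℤ, DeformedDetAux.Bterm τ U b)) * hYV -
      (jtheta τ (Y+U) * jtheta τ (Y-U)) * hXV -
      ((∑' b : ℤ, DeformedDetAux.Bterm τ X b) * (∑' a : ℤ, DeformedDetAux.Aterm τ V a) -
        (∑' a : ℤ, DeformedDetAux.Aterm τ X a) * (∑' b : ℤ, DeformedDetAux.Bterm τ V b)) * hYU -
      (jtheta τ (U+V) * jtheta τ (U-V)) * hXY -
      ((∑' b : ℤ, DeformedDetAux.Bterm τ X b) * (∑' a : ℤ, DeformedDetAux.Aterm τ Y a) -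
        (∑' a : ℤ, DeformedDetAux.Aterm τ X a) * (∑' b : ℤ, DeformedDetAux.Bterm τ Y b)) * hUV
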